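/- arXiv:1004.0334 — 6 statements merged into one kernel-verified Lean document; each statement's English description precedes it below -/
import Mathlib

section
/- Let E = (C, V) be an election under a scoring rule α, and let s be a successful shift-action for p (i.e., p is a winner after applying s) that increases p's score by k points over its score in E. Then every shift-action r that increases p's score by exactly 2k points over its score in E is also successful, i.e., p is a winner of shf(C, V, r). -/
/-- Shift the designated candidate `p` up by one position in the vote `v`
(a vote is a bijection from candidates to positions; position 0 is the top). -/
def shiftOne {C : Type*} [DecidableEq C] {m : ℕ} (p : C) (v : C ≃ Fin m) : C ≃ Fin m :=
  if h : ((v p : ℕ) = 0) then v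
  else (Equiv.swap p (v.symm ⟨(v p : ℕ) - 1, lt_of_le_of_lt (Nat.sub_le _ _) (v p).isLt⟩)).trans v

/-- Shift `p` upwards by `t` positions in the vote `v` (capping at the top). -/
def shiftVote {C : Type*} [DecidableEq C] {m : ℕ} (p : C) (t : ℕ) (v : C ≃ Fin m) :
    C ≃ Fin m := (shiftOne p)^[t] v

/-- Apply a shift-action `t = (t₁,…,t_n)` to an election: shift `p` upwards by
`t i` positions in the `i`-th vote. -/
def shf {C : Type*} [DecidableEq C] {m n : ℕ} (p : C) (votes : Fin n → C ≃ Fin m)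
    (t : Fin n → ℕ) : Fin n → C ≃ Fin m :=
  fun i => shiftVote p (t i) (votes i)

/-- The score of candidate `x` under the scoring vector `α`. -/
def score {C : Type*} [Fintype C] [DecidableEq C] {m n : ℕ} (α : Fin m → ℤ)
    (votes : Fin n → C ≃ Fin m) (x : C) : ℤ := ∑ i, α (votes i x)

/-- `p` is a winner of the election under the scoring vector `α`. -/
def winner {C : Type*} [Fintype C] [DecidableEq C] {m n : ℕ} (α : Fin m → ℤ)
    (votes : Fin n → C ≃ Fin m) (p : C) : Prop :=
  ∀ x, score α votes x ≤ score α votes p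


lemma shiftOne_key {C : Type*} [DecidableEq C] {m : ℕ} (α : Fin m → ℤ) (hα : Antitone α)
    (p : C) (v : C ≃ Fin m) (x : C) (hx : x ≠ p) :
    α (shiftOne p v x) ≤ α (v x) ∧
      α (v x) + α (v p) ≤ α (shiftOne p v x) + α (shiftOne p v p) := by
  unfold shiftOne
  split
  · exact ⟨le_refl _, le_refl _⟩
  · rename_i h
    set j : Fin m := ⟨(v p : ℕ) - 1, lt_of_le_of_lt (Nat.sub_le _ _) (v p).isLt⟩ with hj
    have hjle : j ≤ v p := by
      simp only [Fin.le_def, hj]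
      exact Nat.sub_le _ _
    have hαj : α (v p) ≤ α j := hα hjle
    simp only [Equiv.trans_apply]
    have hswp : Equiv.swap p (v.symm j) p = v.symm j := Equiv.swap_apply_left _ _
    by_cases hq : x = v.symm j
    · subst hq
      have h1 : Equiv.swap p (v.symm j) (v.symm j) = p := Equiv.swap_apply_right _ _
      rw [h1, hswp, Equiv.apply_symm_apply]
      exact ⟨hαj, by linarith⟩
    · have h1 : Equiv.swap p (v.symm j) x = x := Equiv.swap_apply_of_ne_of_ne hx hq
      rw [h1, hswp, Equiv.apply_symm_apply]
      exact ⟨le_refl _, by linarith⟩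

lemma shiftVote_key {C : Type*} [DecidableEq C] {m : ℕ} (α : Fin m → ℤ) (hα : Antitone α)
    (p : C) (v : C ≃ Fin m) (x : C) (hx : x ≠ p) (t : ℕ) :
    α (shiftVote p t v x) ≤ α (v x) ∧
      α (v x) + α (v p) ≤ α (shiftVote p t v x) + α (shiftVote p t v p) := by
  induction t with
  | zero => exact ⟨le_refl _, le_refl _⟩
  | succ t ih =>
    have hstep := shiftOne_key α hα p (shiftVote p t v) x hx
    have he : shiftVote p (t + 1) v = shiftOne p (shiftVote p t v) := by
      simp [shiftVote, Function.iterate_succ_apply']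
    rw [he]
    exact ⟨le_trans hstep.1 ih.1, le_trans ih.2 hstep.2⟩

/-- Lemma 2 of the paper: if a successful shift-action `s`
increases `p`'s score by `k`, then every shift-action `r` that increases
`p`'s score by exactly `2k` is also successful. -/
theorem stmt1 {C : Type*} [Fintype C] [DecidableEq C] {m n : ℕ}
    (α : Fin m → ℤ) (hα : Antitone α) (p : C)
    (votes : Fin n → C ≃ Fin m) (s r : Fin n → ℕ) (k : ℤ)
    (hs_win : winner α (shf p votes s) p)
    (hk : score α (shf p votes s) p = score α votes p + k)
    (hr : score α (shf p votes r) p = score α votes p + 2 * k) :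
    winner α (shf p votes r) p := by
  intro x
  by_cases hx : x = p
  · subst hx; exact le_refl _
  · have A : score α (shf p votes r) x ≤ score α votes x := by
      unfold score shf
      exact Finset.sum_le_sum fun i _ => (shiftVote_key α hα p (votes i) x hx (r i)).1
    have B : score α votes x + score α votes p ≤
        score α (shf p votes s) x + score α (shf p votes s) p := by
      unfold score shf
      rw [← Finset.sum_add_distrib, ← Finset.sum_add_distrib]
      exact Finset.sum_le_sum fun i _ => (shiftVote_key α hα p (votes i) x hx (s i)).2
    have hw := hs_win x
    linarith
end

section
/- Let E = (C, V) be an election under a scoring rule, and suppose a shift-action s increases p's score by k points and makes p a winner. Then for every candidate c ∈ C, the initial score deficit satisfies Sc_E(c) − Sc_E(p) ≤ 2k. -/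
lemma shiftOne_other_le {C : Type*} [DecidableEq C] {m : ℕ} (α : Fin m → ℤ)
    (hα : Antitone α) (p c : C) (hc : c ≠ p) (v : C ≃ Fin m) :
    α ((shiftOne p v) c) ≤ α (v c) := by
  unfold shiftOne
  split_ifs with h
  · exact le_rfl
  · set q := v.symm ⟨(v p : ℕ) - 1, lt_of_le_of_lt (Nat.sub_le _ _) (v p).isLt⟩ with hq
    rcases eq_or_ne c q with hcq | hcq
    · subst hcq
      simp only [Equiv.trans_apply, Equiv.swap_apply_right]
      apply hα
      rw [hq, Equiv.apply_symm_apply, Fin.le_def]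
      exact Nat.sub_le _ _
    · simp [Equiv.trans_apply, Equiv.swap_apply_of_ne_of_ne hc hcq]

lemma shiftOne_p_ge {C : Type*} [DecidableEq C] {m : ℕ} (α : Fin m → ℤ)
    (hα : Antitone α) (p : C) (v : C ≃ Fin m) :
    α (v p) ≤ α ((shiftOne p v) p) := by
  unfold shiftOne
  split_ifs with h
  · exact le_rfl
  · simp only [Equiv.trans_apply, Equiv.swap_apply_left, Equiv.apply_symm_apply]
    apply hα
    rw [Fin.le_def]
    exact Nat.sub_le _ _

lemma shiftVote_other_le {C : Type*} [DecidableEq C] {m : ℕ} (α : Fin m → ℤ)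
    (hα : Antitone α) (p c : C) (hc : c ≠ p) (t : ℕ) (v : C ≃ Fin m) :
    α ((shiftVote p t v) c) ≤ α (v c) := by
  induction t with
  | zero => exact le_rfl
  | succ t ih =>
    have : shiftVote p (t + 1) v = shiftOne p (shiftVote p t v) := by
      simp [shiftVote, Function.iterate_succ_apply']
    rw [this]
    exact le_trans (shiftOne_other_le α hα p c hc _) ih

lemma shiftVote_p_ge {C : Type*} [DecidableEq C] {m : ℕ} (α : Fin m → ℤ)
    (hα : Antitone α) (p : C) (t : ℕ) (v : C ≃ Fin m) :
    α (v p) ≤ α ((shiftVote p t v) p) := by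
  induction t with
  | zero => exact le_rfl
  | succ t ih =>
    have : shiftVote p (t + 1) v = shiftOne p (shiftVote p t v) := by
      simp [shiftVote, Function.iterate_succ_apply']
    rw [this]
    exact le_trans ih (shiftOne_p_ge α hα p _)

lemma sum_score_const {C : Type*} [Fintype C] [DecidableEq C] {m n : ℕ} (α : Fin m → ℤ)
    (votes : Fin n → C ≃ Fin m) :
    ∑ x, score α votes x = ∑ _i : Fin n, ∑ j, α j := by
  unfold score
  rw [Finset.sum_comm]
  exact Finset.sum_congr rfl fun i _ => Equiv.sum_comp (votes i) α

/-- if a shift-action `s` increases `p`'s score by `k` and makes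
`p` a winner, then every candidate's initial score deficit over `p` is at most `2k`. -/
theorem stmt2 {C : Type*} [Fintype C] [DecidableEq C] {m n : ℕ}
    (α : Fin m → ℤ) (hα : Antitone α) (p : C)
    (votes : Fin n → C ≃ Fin m) (s : Fin n → ℕ) (k : ℤ)
    (hs_win : winner α (shf p votes s) p)
    (hk : score α (shf p votes s) p = score α votes p + k) :
    ∀ c : C, score α votes c - score α votes p ≤ 2 * k := by

  intro c
  set new := shf p votes s with hnew
  have hk0 : 0 ≤ k := by
    have : score α votes p ≤ score α new p :=
      Finset.sum_le_sum fun i _ => shiftVote_p_ge α hα p (s i) (votes i)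
    linarith [hk]
  have hother : ∀ x : C, x ≠ p → score α new x ≤ score α votes x := fun x hx =>
    Finset.sum_le_sum fun i _ => shiftVote_other_le α hα p x hx (s i) (votes i)
  rcases eq_or_ne c p with rfl | hcp
  · linarith
  -- key: score α votes c - score α new c ≤ k
  have hsum : ∑ x, score α new x = ∑ x, score α votes x := by
    rw [sum_score_const, sum_score_const]
  have key : score α votes c - score α new c ≤ k := by
    have hcmem : c ∈ Finset.univ.erase p := Finset.mem_erase.2 ⟨hcp, Finset.mem_univ c⟩
    have hsplit1 : ∑ x, (score α new x - score α votes x)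
        = (score α new p - score α votes p)
          + ∑ x ∈ Finset.univ.erase p, (score α new x - score α votes x) := by
      rw [← Finset.add_sum_erase _ _ (Finset.mem_univ p)]
    have hsplit2 : ∑ x ∈ Finset.univ.erase p, (score α new x - score α votes x)
        = (score α new c - score α votes c)
          + ∑ x ∈ (Finset.univ.erase p).erase c, (score α new x - score α votes x) := by
      rw [← Finset.add_sum_erase _ _ hcmem]
    have hnonpos : ∑ x ∈ (Finset.univ.erase p).erase c,
        (score α new x - score α votes x) ≤ 0 := by
      apply Finset.sum_nonpos
      intro x hx
      have hxp : x ≠ p := (Finset.mem_erase.1 (Finset.mem_of_mem_erase hx)).1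
      linarith [hother x hxp]
    have htot : ∑ x, (score α new x - score α votes x) = 0 := by
      rw [Finset.sum_sub_distrib, hsum]; ring
    rw [hsplit1, hsplit2] at htot
    linarith [hk]
  have hwin := hs_win c
  linarith [hother c hcp, hk]
end

section
/- Let t = (t₁,...,t_n) and s = (s₁,...,s_n) be shift-actions for an instance (C, V, Π, p) of shift bribery, and define r by r_i = min(t_i, s_i). Let Π' be the residual cost functions after applying s, i.e., π'^i(k) = π^i(k + s_i) − π^i(s_i). Then the cost of the shift-action t − r under Π' is at most the cost of t under Π: Π'(t − r) ≤ Π(t). -/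
/-- with `r i = min (t i) (s i)` and residual cost functions
`π'^i(k) = π^i(k + s_i) − π^i(s_i)`, the cost of `t − r` under the residual
costs is at most the cost of `t` under the original costs. -/
theorem stmt3 (n : ℕ) (π : Fin n → ℕ → ℕ)
    (hπ0 : ∀ i, π i 0 = 0) (hπmono : ∀ i, Monotone (π i))
    (t s : Fin n → ℕ) :
    ∑ i, (π i ((t i - min (t i) (s i)) + s i) - π i (s i)) ≤ ∑ i, π i (t i) := by
  refine Finset.sum_le_sum fun i _ => ?_
  rcases le_total (t i) (s i) with h | h
  · simp [min_eq_left h, Nat.sub_eq_zero_of_le h]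
  · rw [min_eq_right h, Nat.sub_add_cancel h]
    exact Nat.sub_le _ _
end

section
/- Let t be an optimal shift-action of cost Π(t) = opt for a shift bribery instance I with n voters, and suppose index i satisfies π^i(t_i) ≥ Π(t)/n. Let d be the shift-action shifting only in vote i by t_i positions, and let s be a (2 + 1/n)-approximate solution for the residual instance shf(I, d), whose optimum equals opt − π^i(t_i). Then the combined shift-action s + d is successful and has cost Π(s + d) ≤ 2·opt. -/
/-- Residual cost functions after applying a shift-action `d`. -/
def residCost {n : ℕ} (π : Fin n → ℕ → ℕ) (d : Fin n → ℕ) : Fin n → ℕ → ℕ :=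
  fun i k => π i (k + d i) - π i (d i)

/-- bootstrapping step: if `t` is an optimal shift-action of cost
`opt`, voter `i` satisfies `π^i(t_i) ≥ Π(t)/n`, `d` shifts only in vote `i` by
`t_i` positions, and `s` is a `(2 + 1/n)`-approximate solution for the residual
instance `shf(I, d)` (whose optimum is `opt − π^i(t_i)`), then `s + d` is
successful and costs at most `2·opt`. -/
theorem stmt7 {C : Type*} [Fintype C] [DecidableEq C] {m n : ℕ} (hn : 0 < n)
    (α : Fin m → ℤ) (hα : Antitone α) (p : C)
    (votes : Fin n → C ≃ Fin m) (π : Fin n → ℕ → ℕ)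
    (hπ0 : ∀ j, π j 0 = 0) (hπmono : ∀ j, Monotone (π j))
    (t : Fin n → ℕ)
    (ht_win : winner α (shf p votes t) p)
    (ht_opt : ∀ u : Fin n → ℕ, winner α (shf p votes u) p →
      ∑ j, π j (t j) ≤ ∑ j, π j (u j))
    (i : Fin n)
    (hbig : ((∑ j, π j (t j) : ℕ) : ℚ) / n ≤ (π i (t i) : ℚ))
    (d : Fin n → ℕ) (hd : d = fun j => if j = i then t i else 0)
    (s : Fin n → ℕ)
    (hs_win : winner α (shf p (shf p votes d) s) p)
    (hres_opt : ∀ u : Fin n → ℕ, winner α (shf p (shf p votes d) u) p →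
      (∑ j, π j (t j)) - π i (t i) ≤ ∑ j, residCost π d j (u j))
    (hs_cost : ((∑ j, residCost π d j (s j) : ℕ) : ℚ) ≤
      (2 + 1 / n) * (((∑ j, π j (t j)) - π i (t i) : ℕ) : ℚ)) :
    winner α (shf p votes (fun j => s j + d j)) p ∧
      ((∑ j, π j (s j + d j) : ℕ) : ℚ) ≤ 2 * ((∑ j, π j (t j) : ℕ) : ℚ) := by

  have hcomp : shf p (shf p votes d) s = shf p votes (fun j => s j + d j) := by
    funext j
    simp only [shf, shiftVote]
    exact (Function.iterate_add_apply _ _ _ _).symm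
  have hwin : winner α (shf p votes (fun j => s j + d j)) p := by
    rw [← hcomp]; exact hs_win
  refine ⟨hwin, ?_⟩
  -- cost decomposition
  have hdec : ∀ j, π j (s j + d j) = residCost π d j (s j) + π j (d j) := by
    intro j
    simp only [residCost]
    rw [Nat.sub_add_cancel (hπmono j (Nat.le_add_left _ _))]
  have hsumd : ∑ j, π j (d j) = π i (t i) := by
    subst hd
    rw [Finset.sum_eq_single i]
    · simp
    · intro b _ hb; simp [hb, hπ0]
    · simp
  have hsum : ∑ j, π j (s j + d j) = (∑ j, residCost π d j (s j)) + π i (t i) := by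
    rw [← hsumd, ← Finset.sum_add_distrib]
    exact Finset.sum_congr rfl (fun j _ => hdec j)
  have hPO : π i (t i) ≤ ∑ j, π j (t j) :=
    Finset.single_le_sum (f := fun j => π j (t j)) (fun j _ => Nat.zero_le _) (Finset.mem_univ i)
  have hPO' : ((π i (t i) : ℕ) : ℚ) ≤ ((∑ j, π j (t j) : ℕ) : ℚ) := by exact_mod_cast hPO
  set O : ℚ := ((∑ j, π j (t j) : ℕ) : ℚ) with hO
  set P : ℚ := ((π i (t i) : ℕ) : ℚ) with hP
  have hP0 : 0 ≤ P := by positivity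
  have hq : (0:ℚ) < (n:ℚ) := by exact_mod_cast hn
  have hbig' : O ≤ P * n := by
    rw [← div_le_iff₀ hq]; exact hbig
  have hcast : (((∑ j, π j (t j)) - π i (t i) : ℕ) : ℚ) = O - P := by
    rw [Nat.cast_sub hPO]
  rw [hsum]
  push_cast
  have hs_cost' : ((∑ j, residCost π d j (s j) : ℕ) : ℚ) ≤ (2 + 1 / n) * (O - P) := by
    rw [← hcast]; exact hs_cost
  have key : (2 + 1 / (n:ℚ)) * (O - P) + P ≤ 2 * O := by
    have h1 : (O - P) / n ≤ P := by
      rw [div_le_iff₀ hq]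
      nlinarith
    have : (2 + 1 / (n:ℚ)) * (O - P) = 2 * (O - P) + (O - P) / n := by ring
    rw [this]; linarith
  push_cast at hs_cost'
  linarith
end

section
/- In the Borda shift-bribery instance I_k with the given cost functions (each of the 4k voters ranking p second charges T per unit shift; voter v^{4k+1} charges T+1 for the first position, T for positions 2..k, T−2 for position k+1, and T−1 thereafter; voter v^{4k+2} charges nothing), the minimum cost of a successful shift-action is exactly 2kT, achieved by shifting p up one position in 2k of the first 4k votes. -/
lemma shiftOne_pos {C : Type*} [DecidableEq C] {m : ℕ} (p x : C) (w : C ≃ Fin m) :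
    ((shiftOne p w) x : ℕ) =
      if (w p : ℕ) = 0 then (w x : ℕ)
      else if x = p then (w p : ℕ) - 1
      else if (w x : ℕ) = (w p : ℕ) - 1 then (w p : ℕ)
      else (w x : ℕ) := by
  by_cases h : ((w p : ℕ) = 0)
  · simp [shiftOne, h]
  · rw [shiftOne, dif_neg h, if_neg h]
    have hq : (w (w.symm ⟨(w p : ℕ) - 1, lt_of_le_of_lt (Nat.sub_le _ _) (w p).isLt⟩) : ℕ)
        = (w p : ℕ) - 1 := by simp
    by_cases hx : x = p
    · subst hx
      rw [if_pos rfl, Equiv.trans_apply, Equiv.swap_apply_left, hq]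
    · rw [if_neg hx]
      by_cases hx2 : (w x : ℕ) = (w p : ℕ) - 1
      · rw [if_pos hx2, Equiv.trans_apply]
        have : x = w.symm ⟨(w p : ℕ) - 1, lt_of_le_of_lt (Nat.sub_le _ _) (w p).isLt⟩ := by
          apply w.injective; rw [Equiv.apply_symm_apply]; exact Fin.ext hx2
        rw [this, Equiv.swap_apply_right]
      · rw [if_neg hx2, Equiv.trans_apply, Equiv.swap_apply_of_ne_of_ne hx]
        intro hc
        apply hx2
        rw [hc, hq]

lemma shiftVote_pos {C : Type*} [DecidableEq C] {m : ℕ} (p : C) (v : C ≃ Fin m) :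
    ∀ (t : ℕ) (x : C), ((shiftVote p t v) x : ℕ) =
      if x = p then (v p : ℕ) - t
      else if (v p : ℕ) - t ≤ (v x : ℕ) ∧ (v x : ℕ) < (v p : ℕ) then (v x : ℕ) + 1
      else (v x : ℕ) := by
  intro t
  induction t with
  | zero =>
    intro x
    simp only [shiftVote, Function.iterate_zero_apply]
    split_ifs with h1 h2
    · rw [h1]; omega
    · omega
    · rfl
  | succ t ih =>
    intro x
    have hstep : shiftVote p (t+1) v = shiftOne p (shiftVote p t v) := by
      simp [shiftVote, Function.iterate_succ_apply']
    rw [hstep, shiftOne_pos, ih x, ih p, if_pos rfl]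
    by_cases hx : x = p
    · subst hx; simp only [if_pos rfl]; split_ifs <;> omega
    · simp only [if_neg hx]; split_ifs <;> omega

lemma sum_split {M : Type*} [AddCommMonoid M] (n : ℕ) (f : Fin (n+2) → M) :
    ∑ v, f v = (∑ v ∈ Finset.univ.filter (fun v : Fin (n+2) => (v:ℕ) < n), f v)
      + f ⟨n, by omega⟩ + f ⟨n+1, by omega⟩ := by
  have h : Finset.univ.filter (fun v : Fin (n+2) => ¬ (v:ℕ) < n)
      = {(⟨n, by omega⟩ : Fin (n+2)), ⟨n+1, by omega⟩} := by
    ext v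
    simp [Finset.mem_filter, Fin.ext_iff]
    omega
  rw [← Finset.sum_filter_add_sum_filter_not Finset.univ (fun v : Fin (n+2) => (v:ℕ) < n) f, h,
    Finset.sum_pair (by simp [Fin.ext_iff]), add_assoc]

lemma card_filter_lt (N m : ℕ) (h : m ≤ N) :
    (Finset.univ.filter fun v : Fin N => (v:ℕ) < m).card = m := by
  apply Finset.card_eq_of_bijective (fun i hi => ⟨i, by omega⟩)
  · intro a ha
    simp only [Finset.mem_filter, Finset.mem_univ, true_and] at ha
    exact ⟨a, ha, Fin.ext rfl⟩
  · intro i hi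
    simp [hi]
  · intro i j hi hj hij
    simpa [Fin.ext_iff] using hij

lemma sum_split' {M : Type*} [AddCommMonoid M] (n : ℕ) (f : Fin (n+2) → M)
    (a b : Fin (n+2)) (ha : (a:ℕ) = n) (hb : (b:ℕ) = n+1) :
    ∑ v, f v = (∑ v ∈ Finset.univ.filter (fun v : Fin (n+2) => (v:ℕ) < n), f v)
      + f a + f b := by
  have h1 : a = ⟨n, by omega⟩ := Fin.ext ha
  have h2 : b = ⟨n+1, by omega⟩ := Fin.ext hb
  rw [h1, h2, sum_split]


set_option maxHeartbeats 2000000 in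
/-- in the Borda shift-bribery instance `I_k` (candidates
`{p, c, a₁, …, a_{4k}}`, `4k+2` voters with the positions of the construction,
and the cost functions described: each of the first `4k` voters, who rank `p`
second, charges `T` per unit shift; voter `v^{4k+1}` charges `T+1` for the
first position, `T` for positions `2..k`, `T−2` for position `k+1`, and `T−1`
thereafter, capping at position `4k+1`; voter `v^{4k+2}` charges nothing), the
minimum cost of a successful shift-action is exactly `2kT`, achieved by
shifting `p` up one position in `2k` of the first `4k` votes. -/
theorem stmt15 (k : ℕ) (hk : 1 ≤ k) (T : ℕ) (hT : T = 2 * k)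
    {C : Type*} [Fintype C] [DecidableEq C] (hcard : Fintype.card C = 4 * k + 2)
    (p c : C) (A : Fin (4 * k) → C)
    (votes : Fin (4 * k + 2) → C ≃ Fin (4 * k + 2))
    (hposP : ∀ v, ((votes v p : Fin (4 * k + 2)) : ℕ) =
      if (v : ℕ) < 4 * k then 1 else if (v : ℕ) = 4 * k then 4 * k + 1 else 0)
    (hposC : ∀ v, ((votes v c : Fin (4 * k + 2)) : ℕ) =
      if (v : ℕ) < 4 * k then 0 else if (v : ℕ) = 4 * k then 0 else 4 * k + 1)
    (hposA : ∀ (j : Fin (4 * k)) v, ((votes v (A j) : Fin (4 * k + 2)) : ℕ) =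
      if (v : ℕ) < 4 * k then
        (if (v : ℕ) % 2 = 0 then (j : ℕ) + 2 else 4 * k + 1 - (j : ℕ))
      else if (v : ℕ) = 4 * k then 4 * k - (j : ℕ) else (j : ℕ) + 1)
    (π : Fin (4 * k + 2) → ℕ → ℕ)
    (hπ0 : ∀ v, π v 0 = 0)
    (hπfirst : ∀ v : Fin (4 * k + 2), (v : ℕ) < 4 * k → ∀ ℓ, 1 ≤ ℓ → π v ℓ = T)
    (hπlast : ∀ v : Fin (4 * k + 2), (v : ℕ) = 4 * k + 1 → ∀ ℓ, π v ℓ = 0)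
    (hπmid : ∀ v : Fin (4 * k + 2), (v : ℕ) = 4 * k →
      (∀ j, 1 ≤ j → j ≤ 4 * k + 1 → π v j = π v (j - 1) +
        (if j = 1 then T + 1 else if j ≤ k then T
         else if j = k + 1 then T - 2 else T - 1)) ∧
      (∀ ℓ, 4 * k + 1 ≤ ℓ → π v ℓ = π v (4 * k + 1))) :
    -- Borda score after applying a shift-action t
    let Sc : (Fin (4 * k + 2) → ℕ) → C → ℤ := fun t x =>
      ∑ v, ((4 * k + 1 : ℤ) - ((shiftVote p (t v) (votes v) x : Fin (4 * k + 2)) : ℕ))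
    let success : (Fin (4 * k + 2) → ℕ) → Prop := fun t => ∀ x, Sc t x ≤ Sc t p
    let cost : (Fin (4 * k + 2) → ℕ) → ℕ := fun t => ∑ v, π v (t v)
    IsLeast {b : ℕ | ∃ t, success t ∧ b = cost t} (2 * k * T) ∧
    ∃ t : Fin (4 * k + 2) → ℕ, (∀ v, t v ≤ 1) ∧
      (∀ v, t v = 1 → (v : ℕ) < 4 * k) ∧
      (Finset.univ.filter fun v => t v = 1).card = 2 * k ∧
      success t ∧ cost t = 2 * k * T := by
  intro Sc success cost
  have hSc : ∀ t x, Sc t x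
      = ∑ v, ((4 * k + 1 : ℤ) - ((shiftVote p (t v) (votes v) x : Fin (4 * k + 2)) : ℕ)) :=
    fun _ _ => rfl
  have hsuccess : ∀ t, success t ↔ ∀ x, Sc t x ≤ Sc t p := fun _ => Iff.rfl
  have hcostdef : ∀ t, cost t = ∑ v, π v (t v) := fun _ => rfl
  set va : Fin (4 * k + 2) := ⟨4 * k, by omega⟩ with hva
  set vb : Fin (4 * k + 2) := ⟨4 * k + 1, by omega⟩ with hvb
  have hva' : (va : ℕ) = 4 * k := rfl
  have hvb' : (vb : ℕ) = 4 * k + 1 := rfl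
  set F : Finset (Fin (4 * k + 2)) :=
    Finset.univ.filter (fun v : Fin (4 * k + 2) => (v : ℕ) < 4 * k) with hF
  have hFcard : F.card = 4 * k := card_filter_lt (4 * k + 2) (4 * k) (by omega)
  set v0 : Fin (4 * k + 2) := ⟨0, by omega⟩ with hv0
  have hv0' : (v0 : ℕ) < 4 * k := by simp only [hv0]; omega
  -- distinctness
  have hcp : c ≠ p := by
    intro h
    have h1 := hposP v0
    have h2 := hposC v0
    rw [h] at h2
    rw [if_pos hv0'] at h1 h2
    omega
  have hap : ∀ j, A j ≠ p := by
    intro j h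
    have h1 := hposP v0
    have h2 := hposA j v0
    rw [h] at h2
    rw [if_pos hv0'] at h1 h2
    rw [if_pos (show (v0 : ℕ) % 2 = 0 from rfl)] at h2
    omega
  -- coverage
  have hcover : ∀ x : C, x = p ∨ x = c ∨ ∃ j, x = A j := by
    intro x
    have hlt := (votes v0 x).isLt
    rcases Nat.lt_or_ge ((votes v0 x : Fin (4 * k + 2)) : ℕ) 2 with h | h
    · rcases Nat.lt_or_ge ((votes v0 x : Fin (4 * k + 2)) : ℕ) 1 with h1 | h1
      · right; left
        apply (votes v0).injective
        apply Fin.ext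
        rw [hposC v0, if_pos hv0']
        omega
      · left
        apply (votes v0).injective
        apply Fin.ext
        rw [hposP v0, if_pos hv0']
        omega
    · right; right
      refine ⟨⟨((votes v0 x : Fin (4 * k + 2)) : ℕ) - 2, by omega⟩, ?_⟩
      have hj : ((votes v0 (A ⟨((votes v0 x : Fin (4 * k + 2)) : ℕ) - 2, by omega⟩)
          : Fin (4 * k + 2)) : ℕ) = ((votes v0 x : Fin (4 * k + 2)) : ℕ) := by
        rw [hposA _ v0, if_pos hv0', if_pos (show (v0 : ℕ) % 2 = 0 from rfl)]
        show ((votes v0 x : Fin (4 * k + 2)) : ℕ) - 2 + 2 = _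
        omega
      exact ((votes v0).injective (Fin.ext hj)).symm
  -- position of p after shifting
  have hpp : ∀ (t : Fin (4 * k + 2) → ℕ) (v : Fin (4 * k + 2)),
      ((shiftVote p (t v) (votes v) p : Fin (4 * k + 2)) : ℕ)
        = (if (v : ℕ) < 4 * k then 1 else if (v : ℕ) = 4 * k then 4 * k + 1 else 0) - t v := by
    intro t v
    rw [shiftVote_pos, if_pos rfl, hposP]
  -- positions never move up for non-p candidates
  have hposge : ∀ (t : Fin (4 * k + 2) → ℕ) (v : Fin (4 * k + 2)) (x : C), x ≠ p →
      ((votes v x : Fin (4 * k + 2)) : ℕ)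
        ≤ ((shiftVote p (t v) (votes v) x : Fin (4 * k + 2)) : ℕ) := by
    intro t v x hx
    rw [shiftVote_pos, if_neg hx]
    split_ifs <;> omega
  -- closed form for the score of p
  have hScp : ∀ t : Fin (4 * k + 2) → ℕ, Sc t p
      = (∑ v ∈ F, ((4 * k : ℤ) + (if 1 ≤ t v then 1 else 0)))
        + (min (t va) (4 * k + 1) : ℕ) + (4 * k + 1) := by
    intro t
    rw [hSc, sum_split' (4 * k) _ va vb hva' hvb']
    congr 1
    congr 1
    · apply Finset.sum_congr rfl
      intro v hv
      have hv' : (v : ℕ) < 4 * k := (Finset.mem_filter.mp hv).2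
      have e : ((shiftVote p (t v) (votes v) p : Fin (4 * k + 2)) : ℕ) = 1 - t v := by
        rw [hpp t v, if_pos hv']
      rw [e]
      split_ifs with h <;> omega
    · have e : ((shiftVote p (t va) (votes va) p : Fin (4 * k + 2)) : ℕ)
          = (4 * k + 1) - t va := by
        rw [hpp t va]
        split_ifs <;> omega
      rw [e]
      omega
    · have e : ((shiftVote p (t vb) (votes vb) p : Fin (4 * k + 2)) : ℕ) = 0 := by
        rw [hpp t vb]
        split_ifs <;> omega
      rw [e]
      omega
  -- closed form for the score of c
  have hScc : ∀ t : Fin (4 * k + 2) → ℕ, Sc t c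
      = (∑ v ∈ F, ((4 * k + 1 : ℤ) - (if 1 ≤ t v then 1 else 0)))
        + ((4 * k + 1 : ℤ) - (if 4 * k + 1 ≤ t va then 1 else 0)) + 0 := by
    intro t
    rw [hSc, sum_split' (4 * k) _ va vb hva' hvb']
    congr 1
    congr 1
    · apply Finset.sum_congr rfl
      intro v hv
      have hv' : (v : ℕ) < 4 * k := (Finset.mem_filter.mp hv).2
      have e : ((shiftVote p (t v) (votes v) c : Fin (4 * k + 2)) : ℕ)
          = if 1 ≤ t v then 1 else 0 := by
        rw [shiftVote_pos, if_neg hcp, hposP v, hposC v]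
        split_ifs <;> omega
      rw [e]
      split_ifs <;> omega
    · have e : ((shiftVote p (t va) (votes va) c : Fin (4 * k + 2)) : ℕ)
          = if 4 * k + 1 ≤ t va then 1 else 0 := by
        rw [shiftVote_pos, if_neg hcp, hposP va, hposC va]
        split_ifs <;> omega
      rw [e]
      split_ifs <;> omega
    · have e : ((shiftVote p (t vb) (votes vb) c : Fin (4 * k + 2)) : ℕ) = 4 * k + 1 := by
        rw [shiftVote_pos, if_neg hcp, hposP vb, hposC vb]
        split_ifs <;> omega
      rw [e]
      omega
  -- the score gap identity
  have hgap : ∀ t : Fin (4 * k + 2) → ℕ,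
      Sc t p - Sc t c = 2 * ((F.filter (fun v => 1 ≤ t v)).card : ℤ)
        + (min (t va) (4 * k + 1) : ℕ)
        + (if 4 * k + 1 ≤ t va then (1 : ℤ) else 0) - 4 * k := by
    intro t
    rw [hScp, hScc]
    have hsum1 : ∑ v ∈ F, ((4 * k : ℤ) + (if 1 ≤ t v then 1 else 0))
        = 4 * k * (4 * k) + ((F.filter (fun v => 1 ≤ t v)).card : ℤ) := by
      rw [Finset.sum_add_distrib, Finset.sum_const, hFcard, Finset.sum_boole]
      push_cast
      ring
    have hsum2 : ∑ v ∈ F, ((4 * k + 1 : ℤ) - (if 1 ≤ t v then 1 else 0))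
        = 4 * k * (4 * k + 1) - ((F.filter (fun v => 1 ≤ t v)).card : ℤ) := by
      rw [Finset.sum_sub_distrib, Finset.sum_const, hFcard, Finset.sum_boole]
      push_cast
      ring
    rw [hsum1, hsum2]
    ring
  -- lower bound for the score of p
  have hScpLB : ∀ t, (16 * k * k + 4 * k + 1 : ℤ) ≤ Sc t p := by
    intro t
    rw [hScp]
    have h1 : ∑ v ∈ F, ((4 * k : ℤ)) ≤ ∑ v ∈ F, ((4 * k : ℤ) + (if 1 ≤ t v then 1 else 0)) := by
      apply Finset.sum_le_sum
      intro v _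
      split_ifs <;> omega
    rw [Finset.sum_const, hFcard, nsmul_eq_mul] at h1
    have h2 : (0 : ℤ) ≤ ((min (t va) (4 * k + 1) : ℕ) : ℤ) := by positivity
    push_cast at h1 h2 ⊢
    nlinarith
  -- upper bound for the scores of the a-candidates
  have hScA : ∀ t j, Sc t (A j) ≤ (16 * k * k + 4 * k : ℤ) := by
    intro t j
    have hjlt : (j : ℕ) < 4 * k := j.isLt
    rw [hSc, sum_split' (4 * k) _ va vb hva' hvb']
    have h1 : ∑ v ∈ F, ((4 * k + 1 : ℤ) - ((shiftVote p (t v) (votes v) (A j) : Fin (4 * k + 2)) : ℕ))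
        ≤ ∑ v ∈ F, ((4 * k - 1 : ℤ)) := by
      apply Finset.sum_le_sum
      intro v hv
      have hv' : (v : ℕ) < 4 * k := (Finset.mem_filter.mp hv).2
      have hge := hposge t v (A j) (hap j)
      have horig := hposA j v
      rw [if_pos hv'] at horig
      have : (2 : ℕ) ≤ ((shiftVote p (t v) (votes v) (A j) : Fin (4 * k + 2)) : ℕ) := by
        rw [horig] at hge
        split_ifs at hge <;> omega
      omega
    rw [Finset.sum_const, hFcard, nsmul_eq_mul] at h1
    have h2 : ((4 * k + 1 : ℤ) - ((shiftVote p (t va) (votes va) (A j) : Fin (4 * k + 2)) : ℕ))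
        ≤ 4 * k := by
      have hge := hposge t va (A j) (hap j)
      have horig : ((votes va (A j) : Fin (4 * k + 2)) : ℕ) = 4 * k - (j : ℕ) := by
        rw [hposA j va]
        split_ifs <;> omega
      rw [horig] at hge
      omega
    have h3 : ((4 * k + 1 : ℤ) - ((shiftVote p (t vb) (votes vb) (A j) : Fin (4 * k + 2)) : ℕ))
        ≤ 4 * k := by
      have hge := hposge t vb (A j) (hap j)
      have horig : ((votes vb (A j) : Fin (4 * k + 2)) : ℕ) = (j : ℕ) + 1 := by
        rw [hposA j vb]
        split_ifs <;> omega
      rw [horig] at hge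
      omega
    push_cast at h1 h2 h3 ⊢
    nlinarith
  -- success is equivalent to beating c
  have hsucc_iff : ∀ t, success t ↔ Sc t c ≤ Sc t p := by
    intro t
    constructor
    · intro h
      exact h c
    · intro h x
      rcases hcover x with rfl | rfl | ⟨j, rfl⟩
      · exact le_refl _
      · exact h
      · exact le_trans (hScA t j) (by linarith [hScpLB t])
  -- cost closed form
  have hcost : ∀ t : Fin (4 * k + 2) → ℕ,
      cost t = (F.filter (fun v => 1 ≤ t v)).card * T + π va (t va) := by
    intro t
    rw [hcostdef, sum_split' (4 * k) _ va vb hva' hvb', hπlast vb hvb', add_zero]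
    congr 1
    have he : ∀ v ∈ F, π v (t v) = if 1 ≤ t v then T else 0 := by
      intro v hv
      have hv' : (v : ℕ) < 4 * k := (Finset.mem_filter.mp hv).2
      rcases Nat.eq_zero_or_pos (t v) with h | h
      · rw [h, hπ0, if_neg (show ¬ (1:ℕ) ≤ 0 by omega)]
      · have h1 : 1 ≤ t v := by omega
        rw [hπfirst v hv' _ h1, if_pos h1]
    rw [Finset.sum_congr rfl he, ← Finset.sum_filter, Finset.sum_const, smul_eq_mul]
  -- the formula for π at the middle voter
  have hπa : ∀ j, j ≤ 4 * k + 1 →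
      π va j = if j = 0 then 0 else if j ≤ k then j * T + 1 else j * T - (j - k) := by
    intro j
    induction j with
    | zero => intro _; simp [hπ0]
    | succ n ih =>
      intro hn
      have hrec := (hπmid va hva').1 (n + 1) (by omega) hn
      rw [Nat.add_sub_cancel] at hrec
      rw [hrec, ih (by omega)]
      rcases Nat.eq_zero_or_pos n with rfl | hnpos
      · norm_num [hk]
      · have h2 : n ≤ n * T := Nat.le_mul_of_pos_right n (by omega)
        have h1 : (n + 1) * T = n * T + T := by ring
        have hT2 : 2 ≤ T := by omega
        rw [if_neg (show ¬ n = 0 by omega), if_neg (show ¬ n + 1 = 0 by omega),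
          if_neg (show ¬ n + 1 = 1 by omega)]
        by_cases hc1 : n + 1 ≤ k
        · rw [if_pos hc1, if_pos (show n ≤ k by omega), if_pos hc1]
          ring
        · rw [if_neg hc1, if_neg hc1]
          by_cases hc2 : n + 1 = k + 1
          · have hnk : n = k := by omega
            rw [if_pos hc2, if_pos (show n ≤ k by omega), h1]
            subst hnk
            generalize n * T = u
            omega
          · rw [if_neg hc2, if_neg (show ¬ n ≤ k by omega), h1]
            generalize n * T = u at h2 ⊢
            omega
  have hπcap : ∀ ℓ, 4 * k + 1 ≤ ℓ → π va ℓ = π va (4 * k + 1) := (hπmid va hva').2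
  -- the witness shift action
  set t₀ : Fin (4 * k + 2) → ℕ := fun v => if (v : ℕ) < 2 * k then 1 else 0 with ht₀
  have ht₀a : t₀ va = 0 := by
    simp only [ht₀, hva']
    rw [if_neg (by omega)]
  have hF0 : F.filter (fun v => 1 ≤ t₀ v)
      = Finset.univ.filter (fun v : Fin (4 * k + 2) => (v : ℕ) < 2 * k) := by
    ext v
    simp only [hF, Finset.filter_filter, Finset.mem_filter, Finset.mem_univ, true_and, ht₀]
    constructor
    · rintro ⟨h1, h2⟩
      by_contra h
      rw [if_neg h] at h2
      omega
    · intro h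
      rw [if_pos h]
      omega
  have hS0 : (F.filter (fun v => 1 ≤ t₀ v)).card = 2 * k := by
    rw [hF0]
    exact card_filter_lt (4 * k + 2) (2 * k) (by omega)
  have hsucc0 : success t₀ := by
    rw [hsucc_iff]
    have hg := hgap t₀
    rw [hS0, ht₀a] at hg
    rw [if_neg (show ¬ 4 * k + 1 ≤ (0:ℕ) by omega)] at hg
    rw [Nat.min_eq_left (by omega : (0:ℕ) ≤ 4 * k + 1)] at hg
    push_cast at hg
    linarith
  have hcost0 : cost t₀ = 2 * k * T := by
    rw [hcost, hS0, ht₀a, hπ0, add_zero]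
  refine ⟨⟨⟨t₀, hsucc0, hcost0.symm⟩, ?_⟩, ?_⟩
  · -- lower bound
    rintro b ⟨t, hst, rfl⟩
    rw [hcost t]
    set s := (F.filter (fun v => 1 ≤ t v)).card with hs
    have hg := hgap t
    have hstc := (hsucc_iff t).1 hst
    by_cases hbig : 4 * k + 1 ≤ t va
    · -- t va is capped
      have e : π va (t va) = (4 * k + 1) * T - (4 * k + 1 - k) := by
        rw [hπcap _ hbig, hπa _ le_rfl, if_neg (by omega), if_neg (by omega)]
      rw [e]
      have h1 : 2 * k * T + (4 * k + 1) ≤ (4 * k + 1) * T := by nlinarith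
      have h3 : 2 * k * T + (4 * k + 1 - k) ≤ (4 * k + 1) * T := by omega
      calc 2 * k * T ≤ (4 * k + 1) * T - (4 * k + 1 - k) := Nat.le_sub_of_add_le h3
        _ ≤ s * T + ((4 * k + 1) * T - (4 * k + 1 - k)) := Nat.le_add_left _ _
    · push_neg at hbig
      have hmin : min (t va) (4 * k + 1) = t va := Nat.min_eq_left (by omega)
      rw [hmin, if_neg (show ¬ 4 * k + 1 ≤ t va by omega)] at hg
      have hcondN : 4 * k ≤ 2 * s + t va := by
        have h0 : (0 : ℤ) ≤ Sc t p - Sc t c := by linarith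
        rw [hg] at h0
        push_cast at h0
        omega
      rcases Nat.eq_zero_or_pos (t va) with h0 | h0
      · rw [h0, hπ0, add_zero]
        have hs2 : 2 * k ≤ s := by omega
        exact Nat.mul_le_mul_right T hs2
      · have e := hπa (t va) (by omega)
        rw [if_neg (by omega)] at e
        have hb2 : 4 * k * T ≤ (2 * s + t va) * T := Nat.mul_le_mul_right T hcondN
        have hb1 : (2 * s + t va) * T = 2 * (s * T) + t va * T := by ring
        by_cases hsmall : t va ≤ k
        · rw [if_pos hsmall] at e
          rw [e]
          nlinarith
        · rw [if_neg hsmall] at e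
          rw [e]
          have h4 : t va - k ≤ t va * T := by
            have : t va * 1 ≤ t va * T := Nat.mul_le_mul_left _ (by omega)
            omega
          rw [← Nat.add_sub_assoc h4]
          apply Nat.le_sub_of_add_le
          have hb3 : 2 * (t va) ≤ t va * T := by
            have : t va * 2 ≤ t va * T := Nat.mul_le_mul_left _ (by omega)
            omega
          have hd : t va - k ≤ t va := by omega
          linarith
  · -- the explicit witness
    refine ⟨t₀, ?_, ?_, ?_, hsucc0, hcost0⟩
    · intro v
      simp only [ht₀]
      split_ifs <;> omega
    · intro v hv
      simp only [ht₀] at hv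
      by_contra h
      rw [if_neg (by omega)] at hv
      omega
    · have : (Finset.univ.filter fun v : Fin (4 * k + 2) => t₀ v = 1)
          = Finset.univ.filter (fun v : Fin (4 * k + 2) => (v : ℕ) < 2 * k) := by
        ext v
        simp only [Finset.mem_filter, Finset.mem_univ, true_and, ht₀]
        split_ifs with h <;> simp [h]
      rw [this]
      exact card_filter_lt (4 * k + 2) (2 * k) (by omega)
end

section
/- For every ε > 0 there exists an instance I of Borda shift bribery such that the solution output by the single-pass greedy algorithm G has cost at least (2 − ε) times the cost of the solution output by the two-pass algorithm A; specifically, for k = ⌈1/ε⌉ and T = 2k, the instance I_k has opt(I_k) = 2kT achieved by A, while G outputs a solution of cost 4kT − 3k, and 4kT − 3k > (2 − ε)·2kT. -/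
section Generic
variable {C : Type*} [DecidableEq C] {m : ℕ}

lemma shiftOne_apply_p (p : C) (v : C ≃ Fin m) :
    ((shiftOne p v) p : ℕ) = (v p : ℕ) - 1 := by
  unfold shiftOne
  split
  · omega
  · simp [Equiv.trans_apply, Equiv.swap_apply_left]

lemma shiftOne_apply_ne (p x : C) (hx : x ≠ p) (v : C ≃ Fin m) :
    ((shiftOne p v) x : ℕ) =
      if (v x : ℕ) + 1 = (v p : ℕ) then (v p : ℕ) else (v x : ℕ) := by
  unfold shiftOne
  split
  · rename_i h
    rw [if_neg (by omega)]
  · rename_i h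
    rw [Equiv.trans_apply]
    by_cases hq : x = v.symm ⟨(v p : ℕ) - 1, lt_of_le_of_lt (Nat.sub_le _ _) (v p).isLt⟩
    · have hvx : (v x : ℕ) = (v p : ℕ) - 1 := by
        rw [hq]; simp
      rw [if_pos (by omega), hq, Equiv.swap_apply_right]
    · have hvx : (v x : ℕ) ≠ (v p : ℕ) - 1 := by
        intro hc
        apply hq
        apply v.injective
        simp [Fin.ext_iff, hc]
      rw [if_neg (by omega), Equiv.swap_apply_of_ne_of_ne hx hq]

lemma shiftVote_succ (p : C) (t : ℕ) (v : C ≃ Fin m) :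
    shiftVote p (t+1) v = shiftOne p (shiftVote p t v) := by
  unfold shiftVote
  rw [Function.iterate_succ_apply']

lemma shiftVote_apply_p (p : C) (t : ℕ) (v : C ≃ Fin m) :
    ((shiftVote p t v) p : ℕ) = (v p : ℕ) - t := by
  induction t with
  | zero => rfl
  | succ n ih => rw [shiftVote_succ, shiftOne_apply_p, ih]; omega

lemma shiftVote_apply_above (p x : C) (t : ℕ) (v : C ≃ Fin m)
    (hx : (v p : ℕ) < (v x : ℕ)) :
    ((shiftVote p t v) x : ℕ) = (v x : ℕ) := by
  have hxp : x ≠ p := by rintro rfl; omega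
  induction t with
  | zero => rfl
  | succ n ih =>
    rw [shiftVote_succ, shiftOne_apply_ne p x hxp, ih]
    have := shiftVote_apply_p p n v
    rw [if_neg (by omega)]

lemma shiftVote_apply_top (p x : C) (t : ℕ) (v : C ≃ Fin m)
    (hx0 : (v x : ℕ) = 0) (hp : 0 < (v p : ℕ)) (hxp : x ≠ p) :
    ((shiftVote p t v) x : ℕ) = if (v p : ℕ) ≤ t then 1 else 0 := by
  induction t with
  | zero => rw [if_neg (by omega)]; exact hx0
  | succ n ih =>
    rw [shiftVote_succ, shiftOne_apply_ne p x hxp, ih]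
    have hpn := shiftVote_apply_p p n v
    by_cases hle : (v p : ℕ) ≤ n
    · rw [if_pos hle, if_neg (by omega), if_pos (by omega)]
    · rw [if_neg hle]
      by_cases heq : (v p : ℕ) = n + 1
      · rw [if_pos (by omega), if_pos (by omega)]; omega
      · rw [if_neg (by omega), if_neg (by omega)]

lemma shiftVote_apply_ge (p x : C) (hx : x ≠ p) (t : ℕ) (v : C ≃ Fin m) :
    (v x : ℕ) ≤ ((shiftVote p t v) x : ℕ) := by
  induction t with
  | zero => exact le_refl _
  | succ n ih =>
    rw [shiftVote_succ, shiftOne_apply_ne p x hx]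
    split
    · omega
    · exact ih
end Generic

section Inst
variable (k : ℕ)

def i0 : Fin (4*k+2) := ⟨0, by omega⟩
def i1 : Fin (4*k+2) := ⟨1, by omega⟩
def i2 : Fin (4*k+2) := ⟨2 % (4*k+2), Nat.mod_lt _ (by omega)⟩
def iN : Fin (4*k+2) := ⟨4*k+1, by omega⟩

def myVotes : Fin (4*k+2) → (Fin (4*k+2) ≃ Fin (4*k+2)) := fun v =>
  if v = i0 k then (Equiv.swap (i1 k) (i2 k)).trans (Equiv.swap (i0 k) (i1 k))
  else if v = i1 k then Equiv.swap (i0 k) (i1 k)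
  else if v = iN k then (Equiv.swap (i0 k) (i1 k)).trans (Equiv.swap (i1 k) (iN k))
  else Equiv.refl _

def myπ : Fin (4*k+2) → ℕ → ℕ := fun v t =>
  (if v = i0 k then 4*k*k - 3*k else if v = i1 k then 4*k*k else 8*k*k) * t

variable {k}

lemma i2_val (hk : 1 ≤ k) : ((i2 k) : ℕ) = 2 := by
  simp only [i2]; exact Nat.mod_eq_of_lt (by omega)

lemma ne01 : i0 k ≠ i1 k := by
  simp only [Fin.ne_iff_vne, i0, i1]; omega
lemma ne02 (hk : 1 ≤ k) : i0 k ≠ i2 k := by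
  simp only [Fin.ne_iff_vne, i2_val hk, i0]; omega
lemma ne12 (hk : 1 ≤ k) : i1 k ≠ i2 k := by
  simp only [Fin.ne_iff_vne, i2_val hk, i1]; omega
lemma ne0N : i0 k ≠ iN k := by
  simp only [Fin.ne_iff_vne, i0, iN]; omega
lemma ne1N (hk : 1 ≤ k) : i1 k ≠ iN k := by
  simp only [Fin.ne_iff_vne, i1, iN]; omega
lemma ne2N (hk : 1 ≤ k) : i2 k ≠ iN k := by
  simp only [Fin.ne_iff_vne, i2_val hk, iN]; omega

-- values of vote 0 (the vote with index i0)
lemma v0_p (hk : 1 ≤ k) : (myVotes k (i0 k)) (i0 k) = i1 k := by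
  rw [myVotes, if_pos rfl, Equiv.trans_apply,
    Equiv.swap_apply_of_ne_of_ne ne01 (ne02 hk), Equiv.swap_apply_left]
lemma v0_c (hk : 1 ≤ k) : (myVotes k (i0 k)) (i1 k) = i2 k := by
  rw [myVotes, if_pos rfl, Equiv.trans_apply, Equiv.swap_apply_left,
    Equiv.swap_apply_of_ne_of_ne (Ne.symm (ne02 hk)) (Ne.symm (ne12 hk))]
lemma v0_d2 : (myVotes k (i0 k)) (i2 k) = i0 k := by
  rw [myVotes, if_pos rfl, Equiv.trans_apply, Equiv.swap_apply_right,
    Equiv.swap_apply_right]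
lemma v0_other (x : Fin (4*k+2)) (h1 : x ≠ i1 k) (h2 : x ≠ i2 k) (h0 : x ≠ i0 k) :
    (myVotes k (i0 k)) x = x := by
  rw [myVotes, if_pos rfl, Equiv.trans_apply,
    Equiv.swap_apply_of_ne_of_ne h1 h2, Equiv.swap_apply_of_ne_of_ne h0 h1]

-- values of vote 1
lemma v1_eq : myVotes k (i1 k) = Equiv.swap (i0 k) (i1 k) := by
  rw [myVotes, if_neg (Ne.symm ne01), if_pos rfl]
lemma v1_p : (myVotes k (i1 k)) (i0 k) = i1 k := by
  rw [v1_eq, Equiv.swap_apply_left]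
lemma v1_c : (myVotes k (i1 k)) (i1 k) = i0 k := by
  rw [v1_eq, Equiv.swap_apply_right]
lemma v1_other (x : Fin (4*k+2)) (h0 : x ≠ i0 k) (h1 : x ≠ i1 k) :
    (myVotes k (i1 k)) x = x := by
  rw [v1_eq, Equiv.swap_apply_of_ne_of_ne h0 h1]

-- values of vote N
lemma vN_eq (hk : 1 ≤ k) :
    myVotes k (iN k) = (Equiv.swap (i0 k) (i1 k)).trans (Equiv.swap (i1 k) (iN k)) := by
  rw [myVotes, if_neg (Ne.symm ne0N), if_neg (Ne.symm (ne1N hk)), if_pos rfl]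
lemma vN_p (hk : 1 ≤ k) : (myVotes k (iN k)) (i0 k) = iN k := by
  rw [vN_eq hk, Equiv.trans_apply, Equiv.swap_apply_left, Equiv.swap_apply_left]
lemma vN_c (hk : 1 ≤ k) : (myVotes k (iN k)) (i1 k) = i0 k := by
  rw [vN_eq hk, Equiv.trans_apply, Equiv.swap_apply_right,
    Equiv.swap_apply_of_ne_of_ne ne01 ne0N]
lemma vN_dN (hk : 1 ≤ k) : (myVotes k (iN k)) (iN k) = i1 k := by
  rw [vN_eq hk, Equiv.trans_apply,
    Equiv.swap_apply_of_ne_of_ne (Ne.symm ne0N) (Ne.symm (ne1N hk)),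
    Equiv.swap_apply_right]
lemma vN_other (hk : 1 ≤ k) (x : Fin (4*k+2)) (h0 : x ≠ i0 k) (h1 : x ≠ i1 k)
    (hN : x ≠ iN k) : (myVotes k (iN k)) x = x := by
  rw [vN_eq hk, Equiv.trans_apply, Equiv.swap_apply_of_ne_of_ne h0 h1,
    Equiv.swap_apply_of_ne_of_ne h1 hN]

lemma vOther_eq (v : Fin (4*k+2)) (h0 : v ≠ i0 k) (h1 : v ≠ i1 k) (hN : v ≠ iN k) :
    myVotes k v = Equiv.refl _ := by
  rw [myVotes, if_neg h0, if_neg h1, if_neg hN]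


-- the score function of the instance
def ScF (k : ℕ) (t : Fin (4*k+2) → ℕ) (x : Fin (4*k+2)) : ℤ :=
  ∑ v, ((4 * k + 1 : ℤ) - ((shiftVote (i0 k) (t v) (myVotes k v) x : Fin (4 * k + 2)) : ℕ))

def costF (k : ℕ) (t : Fin (4*k+2) → ℕ) : ℕ := ∑ v, myπ k v (t v)

def Bp (k : ℕ) : ℤ := 16*(k:ℤ)*k + 8*k - 1

variable {k : ℕ}

def rest (k : ℕ) : Finset (Fin (4*k+2)) :=
  ((Finset.univ.erase (i0 k)).erase (i1 k)).erase (iN k)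

lemma mem_rest {v : Fin (4*k+2)} :
    v ∈ rest k ↔ v ≠ iN k ∧ v ≠ i1 k ∧ v ≠ i0 k := by
  simp [rest, Finset.mem_erase]

lemma sum_split_s17 {M : Type*} [AddCommMonoid M] (hk : 1 ≤ k) (g : Fin (4*k+2) → M) :
    ∑ v, g v = g (i0 k) + g (i1 k) + g (iN k) + ∑ v ∈ rest k, g v := by
  have h0 : i0 k ∈ (Finset.univ : Finset (Fin (4*k+2))) := Finset.mem_univ _
  have h1 : i1 k ∈ Finset.univ.erase (i0 k) :=
    Finset.mem_erase.mpr ⟨Ne.symm ne01, Finset.mem_univ _⟩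
  have hN : iN k ∈ (Finset.univ.erase (i0 k)).erase (i1 k) :=
    Finset.mem_erase.mpr ⟨Ne.symm (ne1N hk), Finset.mem_erase.mpr ⟨Ne.symm ne0N, Finset.mem_univ _⟩⟩
  rw [← Finset.add_sum_erase _ g h0, ← Finset.add_sum_erase _ g h1,
    ← Finset.add_sum_erase _ g hN, rest]
  simp only [add_assoc]

lemma card_rest (hk : 1 ≤ k) : (rest k).card = 4*k - 1 := by
  have h1 : i1 k ∈ Finset.univ.erase (i0 k) :=
    Finset.mem_erase.mpr ⟨Ne.symm ne01, Finset.mem_univ _⟩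
  have hN : iN k ∈ (Finset.univ.erase (i0 k)).erase (i1 k) :=
    Finset.mem_erase.mpr ⟨Ne.symm (ne1N hk), Finset.mem_erase.mpr ⟨Ne.symm ne0N, Finset.mem_univ _⟩⟩
  rw [rest, Finset.card_erase_of_mem hN, Finset.card_erase_of_mem h1,
    Finset.card_erase_of_mem (Finset.mem_univ _), Finset.card_univ, Fintype.card_fin]
  omega

lemma Sc_p_eq (hk : 1 ≤ k) (t : Fin (4*k+2) → ℕ) :
    ScF k t (i0 k) = Bp k + (if 1 ≤ t (i0 k) then 1 else 0)
      + (if 1 ≤ t (i1 k) then 1 else 0) + (min (t (iN k)) (4*k+1) : ℕ) := by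
  rw [ScF, sum_split_s17 hk]
  have e0 : ((shiftVote (i0 k) (t (i0 k)) (myVotes k (i0 k)) (i0 k) : Fin (4*k+2)) : ℕ)
      = 1 - t (i0 k) := by
    rw [shiftVote_apply_p, v0_p hk]; rfl
  have e1 : ((shiftVote (i0 k) (t (i1 k)) (myVotes k (i1 k)) (i0 k) : Fin (4*k+2)) : ℕ)
      = 1 - t (i1 k) := by
    rw [shiftVote_apply_p, v1_p]; rfl
  have eN : ((shiftVote (i0 k) (t (iN k)) (myVotes k (iN k)) (i0 k) : Fin (4*k+2)) : ℕ)
      = (4*k+1) - t (iN k) := by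
    rw [shiftVote_apply_p, vN_p hk]; rfl
  have er : ∑ v ∈ rest k, ((4 * k + 1 : ℤ) -
      ((shiftVote (i0 k) (t v) (myVotes k v) (i0 k) : Fin (4*k+2)) : ℕ))
      = (4*k - 1 : ℕ) • (4 * (k:ℤ) + 1) := by
    rw [← card_rest hk, ← Finset.sum_const]
    apply Finset.sum_congr rfl
    intro v hv
    rw [mem_rest] at hv
    rw [vOther_eq v hv.2.2 hv.2.1 hv.1, shiftVote_apply_p]
    simp [i0]
  rw [e0, e1, eN, er, nsmul_eq_mul]
  have hprod : ((4*k-1 : ℕ) : ℤ) * (4 * (k:ℤ) + 1) = 16*(k:ℤ)*k - 1 := by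
    rw [Nat.cast_sub (by omega)]
    push_cast; ring
  rw [hprod, Bp]
  split_ifs <;> omega

lemma Sc_c_eq (hk : 1 ≤ k) (t : Fin (4*k+2) → ℕ) :
    ScF k t (i1 k) = Bp k + 2 - (if 1 ≤ t (i1 k) then 1 else 0)
      - (if 4*k+1 ≤ t (iN k) then 1 else 0) := by
  rw [ScF, sum_split_s17 hk]
  have e0 : ((shiftVote (i0 k) (t (i0 k)) (myVotes k (i0 k)) (i1 k) : Fin (4*k+2)) : ℕ)
      = 2 := by
    rw [shiftVote_apply_above _ _ _ _ (by rw [v0_p hk, v0_c hk, i2_val hk]; simp [i1]),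
      v0_c hk, i2_val hk]
  have e1 : ((shiftVote (i0 k) (t (i1 k)) (myVotes k (i1 k)) (i1 k) : Fin (4*k+2)) : ℕ)
      = if 1 ≤ t (i1 k) then 1 else 0 := by
    rw [shiftVote_apply_top _ _ _ _ (by rw [v1_c]; rfl) (by rw [v1_p]; simp [i1])
      (Ne.symm ne01), v1_p]
    rfl
  have eN : ((shiftVote (i0 k) (t (iN k)) (myVotes k (iN k)) (i1 k) : Fin (4*k+2)) : ℕ)
      = if 4*k+1 ≤ t (iN k) then 1 else 0 := by
    rw [shiftVote_apply_top _ _ _ _ (by rw [vN_c hk]; rfl) (by rw [vN_p hk]; simp [iN])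
      (Ne.symm ne01), vN_p hk]
    rfl
  have er : ∑ v ∈ rest k, ((4 * k + 1 : ℤ) -
      ((shiftVote (i0 k) (t v) (myVotes k v) (i1 k) : Fin (4*k+2)) : ℕ))
      = (4*k - 1 : ℕ) • (4 * (k:ℤ)) := by
    rw [← card_rest hk, ← Finset.sum_const]
    apply Finset.sum_congr rfl
    intro v hv
    rw [mem_rest] at hv
    rw [vOther_eq v hv.2.2 hv.2.1 hv.1,
      shiftVote_apply_above _ _ _ _ (by simp [i0, i1])]
    simp [i1]
  rw [e0, e1, eN, er, nsmul_eq_mul]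
  have hprod : ((4*k-1 : ℕ) : ℤ) * (4 * (k:ℤ)) = 16*(k:ℤ)*k - 4*(k:ℤ) := by
    rw [Nat.cast_sub (by omega)]
    push_cast; ring
  rw [hprod, Bp]
  split_ifs <;> omega

lemma Sc_dummy_le (hk : 1 ≤ k) (t : Fin (4*k+2) → ℕ) (x : Fin (4*k+2))
    (hx0 : x ≠ i0 k) (hx1 : x ≠ i1 k) : ScF k t x ≤ Bp k := by
  have step : ScF k t x ≤ ∑ v, ((4 * k + 1 : ℤ) - ((myVotes k v x : Fin (4*k+2)) : ℕ)) := by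
    apply Finset.sum_le_sum
    intro v _
    have := shiftVote_apply_ge (i0 k) x hx0 (t v) (myVotes k v)
    omega
  refine le_trans step ?_
  have hk' : (1:ℤ) ≤ (k:ℤ) := by exact_mod_cast hk
  by_cases hx2 : x = i2 k
  · subst hx2
    rw [sum_split_s17 hk]
    have e0 : ((myVotes k (i0 k) (i2 k) : Fin (4*k+2)) : ℕ) = 0 := by rw [v0_d2]; rfl
    have e1 : ((myVotes k (i1 k) (i2 k) : Fin (4*k+2)) : ℕ) = 2 := by
      rw [v1_other _ (Ne.symm (ne02 hk)) (Ne.symm (ne12 hk)), i2_val hk]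
    have eN : ((myVotes k (iN k) (i2 k) : Fin (4*k+2)) : ℕ) = 2 := by
      rw [vN_other hk _ (Ne.symm (ne02 hk)) (Ne.symm (ne12 hk)) (ne2N hk), i2_val hk]
    have er : ∑ v ∈ rest k, ((4 * k + 1 : ℤ) - ((myVotes k v (i2 k) : Fin (4*k+2)) : ℕ))
        = (4*k - 1 : ℕ) • (4 * (k:ℤ) - 1) := by
      rw [← card_rest hk, ← Finset.sum_const]
      apply Finset.sum_congr rfl
      intro v hv
      rw [mem_rest] at hv
      rw [vOther_eq v hv.2.2 hv.2.1 hv.1, Equiv.refl_apply, i2_val hk]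
      push_cast; ring
    rw [e0, e1, eN, er, nsmul_eq_mul]
    have hprod : ((4*k-1 : ℕ) : ℤ) * (4 * (k:ℤ) - 1) = 16*(k:ℤ)*k - 8*(k:ℤ) + 1 := by
      rw [Nat.cast_sub (by omega)]
      push_cast; ring
    rw [hprod, Bp]
    omega
  · by_cases hxN : x = iN k
    · subst hxN
      rw [sum_split_s17 hk]
      have e0 : ((myVotes k (i0 k) (iN k) : Fin (4*k+2)) : ℕ) = 4*k+1 := by
        rw [v0_other _ (Ne.symm (ne1N hk)) (Ne.symm (ne2N hk)) (Ne.symm ne0N)]; rfl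
      have e1 : ((myVotes k (i1 k) (iN k) : Fin (4*k+2)) : ℕ) = 4*k+1 := by
        rw [v1_other _ (Ne.symm ne0N) (Ne.symm (ne1N hk))]; rfl
      have eN : ((myVotes k (iN k) (iN k) : Fin (4*k+2)) : ℕ) = 1 := by
        rw [vN_dN hk]; rfl
      have er : ∑ v ∈ rest k, ((4 * k + 1 : ℤ) - ((myVotes k v (iN k) : Fin (4*k+2)) : ℕ))
          = (4*k - 1 : ℕ) • (0 : ℤ) := by
        rw [← card_rest hk, ← Finset.sum_const]
        apply Finset.sum_congr rfl
        intro v hv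
        rw [mem_rest] at hv
        rw [vOther_eq v hv.2.2 hv.2.1 hv.1, Equiv.refl_apply]
        have : ((iN k : Fin (4*k+2)) : ℕ) = 4*k+1 := rfl
        rw [this]
        push_cast; ring
      rw [e0, e1, eN, er, smul_zero, Bp]
      have hsq : (0:ℤ) ≤ 16*(k:ℤ)*k := by positivity
      omega
    · -- generic dummy, fixed by all votes
      have hval : 3 ≤ (x : ℕ) ∧ (x : ℕ) ≤ 4*k+1 := by
        constructor
        · have v0 : (x:ℕ) ≠ 0 := by
            intro hc; exact hx0 (Fin.ext (by simpa [i0] using hc))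
          have v1 : (x:ℕ) ≠ 1 := by
            intro hc; exact hx1 (Fin.ext (by simpa [i1] using hc))
          have v2 : (x:ℕ) ≠ 2 := by
            intro hc; exact hx2 (Fin.ext (by rw [i2_val hk]; exact hc))
          omega
        · exact Nat.lt_succ_iff.mp (by have := x.isLt; omega)
      have hfix : ∀ v : Fin (4*k+2), ((myVotes k v x : Fin (4*k+2)) : ℕ) = (x:ℕ) := by
        intro v
        by_cases h0 : v = i0 k
        · subst h0; rw [v0_other _ hx1 hx2 hx0]
        · by_cases h1 : v = i1 k
          · subst h1; rw [v1_other _ hx0 hx1]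
          · by_cases hN : v = iN k
            · subst hN; rw [vN_other hk _ hx0 hx1 hxN]
            · rw [vOther_eq v h0 h1 hN]; rfl
      calc ∑ v, ((4 * k + 1 : ℤ) - ((myVotes k v x : Fin (4*k+2)) : ℕ))
          = ∑ _v : Fin (4*k+2), ((4 * k + 1 : ℤ) - (x:ℕ)) := by
            apply Finset.sum_congr rfl; intro v _; rw [hfix]
        _ = (4*k+2 : ℕ) • ((4 * k + 1 : ℤ) - (x:ℕ)) := by
            rw [Finset.sum_const, Finset.card_univ, Fintype.card_fin]
        _ ≤ Bp k := by
            rw [nsmul_eq_mul, Bp]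
            have h3 : (3:ℤ) ≤ ((x:ℕ):ℤ) := by exact_mod_cast hval.1
            push_cast
            nlinarith


lemma myπ_zero (v : Fin (4*k+2)) : myπ k v 0 = 0 := by rw [myπ]; exact Nat.mul_zero _

lemma myπ_i0 (a : ℕ) : myπ k (i0 k) a = (4*k*k - 3*k) * a := by rw [myπ, if_pos rfl]

lemma myπ_i1 (a : ℕ) : myπ k (i1 k) a = (4*k*k) * a := by
  rw [myπ, if_neg (Ne.symm ne01), if_pos rfl]

lemma myπ_other (v : Fin (4*k+2)) (h0 : v ≠ i0 k) (h1 : v ≠ i1 k) (a : ℕ) :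
    myπ k v a = (8*k*k) * a := by
  rw [myπ, if_neg h0, if_neg h1]

lemma cost_term_le (t : Fin (4*k+2) → ℕ) (v : Fin (4*k+2)) :
    myπ k v (t v) ≤ costF k t := by
  rw [costF]
  exact Finset.single_le_sum (f := fun v => myπ k v (t v))
    (fun i _ => Nat.zero_le _) (Finset.mem_univ v)

lemma le_cost_of_i0 (t : Fin (4*k+2) → ℕ) (h : 1 ≤ t (i0 k)) :
    4*k*k - 3*k ≤ costF k t := by
  refine le_trans ?_ (cost_term_le t (i0 k))
  rw [myπ_i0]
  exact Nat.le_mul_of_pos_right _ h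

lemma le_cost_of_i1 (t : Fin (4*k+2) → ℕ) (h : 1 ≤ t (i1 k)) :
    4*k*k ≤ costF k t := by
  refine le_trans ?_ (cost_term_le t (i1 k))
  rw [myπ_i1]
  exact Nat.le_mul_of_pos_right _ h

lemma le_cost_of_other (t : Fin (4*k+2) → ℕ) (v : Fin (4*k+2)) (h0 : v ≠ i0 k)
    (h1 : v ≠ i1 k) (h : 1 ≤ t v) : 8*k*k ≤ costF k t := by
  refine le_trans ?_ (cost_term_le t v)
  rw [myπ_other v h0 h1]
  exact Nat.le_mul_of_pos_right _ h

lemma le_cost_pair (hk : 1 ≤ k) (t : Fin (4*k+2) → ℕ) (h0 : 1 ≤ t (i0 k))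
    (h1 : 1 ≤ t (i1 k)) : 4*k*k - 3*k + 4*k*k ≤ costF k t := by
  rw [costF, sum_split_s17 hk]
  have b0 : 4*k*k - 3*k ≤ myπ k (i0 k) (t (i0 k)) := by
    rw [myπ_i0]; exact Nat.le_mul_of_pos_right _ h0
  have b1 : 4*k*k ≤ myπ k (i1 k) (t (i1 k)) := by
    rw [myπ_i1]; exact Nat.le_mul_of_pos_right _ h1
  omega

lemma cost_zero_off (t : Fin (4*k+2) → ℕ) (ℓ : ℕ) (hc : costF k t ≤ ℓ)
    (hl : ℓ < 8*k*k) (v : Fin (4*k+2)) (h0 : v ≠ i0 k) (h1 : v ≠ i1 k) : t v = 0 := by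
  by_contra h
  have h1' : 1 ≤ t v := by omega
  have := le_cost_of_other t v h0 h1 h1'
  omega

lemma cost_single1 (hk : 1 ≤ k) :
    costF k (fun v => if v = i1 k then 1 else 0) = 4*k*k := by
  rw [costF, sum_split_s17 hk]
  rw [if_neg ne01, if_pos rfl, if_neg (Ne.symm (ne1N hk)), myπ_zero, myπ_zero, myπ_i1]
  have hr : ∑ v ∈ rest k, myπ k v (if v = i1 k then 1 else 0) = 0 := by
    apply Finset.sum_eq_zero
    intro v hv
    rw [mem_rest] at hv
    rw [if_neg hv.2.1, myπ_zero]
  rw [hr]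
  omega

lemma cost_single0 (hk : 1 ≤ k) :
    costF k (fun v => if v = i0 k then 1 else 0) = 4*k*k - 3*k := by
  rw [costF, sum_split_s17 hk]
  rw [if_pos rfl, if_neg (Ne.symm ne01), if_neg (Ne.symm ne0N), myπ_zero, myπ_zero, myπ_i0]
  have hr : ∑ v ∈ rest k, myπ k v (if v = i0 k then 1 else 0) = 0 := by
    apply Finset.sum_eq_zero
    intro v hv
    rw [mem_rest] at hv
    rw [if_neg hv.2.2, myπ_zero]
  rw [hr]
  omega

lemma cost_pair (hk : 1 ≤ k) :
    costF k (fun v => if v = i0 k then 1 else if v = i1 k then 1 else 0)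
      = 4*k*k - 3*k + 4*k*k := by
  rw [costF, sum_split_s17 hk]
  rw [if_pos rfl, if_neg (Ne.symm ne01), if_pos rfl, if_neg (Ne.symm ne0N),
    if_neg (Ne.symm (ne1N hk)), myπ_zero, myπ_i0, myπ_i1]
  have hr : ∑ v ∈ rest k,
      myπ k v (if v = i0 k then 1 else if v = i1 k then 1 else 0) = 0 := by
    apply Finset.sum_eq_zero
    intro v hv
    rw [mem_rest] at hv
    rw [if_neg hv.2.2, if_neg hv.2.1, myπ_zero]
  rw [hr]
  omega

lemma ex_q (k : ℕ) (hk : 1 ≤ k) : ∃ q, 4*k*k = 4*q ∧ 8*k*k = 8*q ∧ k ≤ q :=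
  ⟨k*k, mul_assoc 4 k k, mul_assoc 8 k k, Nat.le_mul_of_pos_left k (by omega)⟩

-- win characterizations
lemma winof (hk : 1 ≤ k) (t : Fin (4*k+2) → ℕ) (h1 : 1 ≤ t (i1 k)) :
    ∀ x, ScF k t x ≤ ScF k t (i0 k) := by
  intro x
  by_cases hx0 : x = i0 k
  · subst hx0; exact le_refl _
  by_cases hx1 : x = i1 k
  · subst hx1
    rw [Sc_c_eq hk, Sc_p_eq hk]
    split_ifs <;> omega
  · refine le_trans (Sc_dummy_le hk t x hx0 hx1) ?_
    rw [Sc_p_eq hk]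
    split_ifs <;> omega

lemma winonly (hk : 1 ≤ k) (t : Fin (4*k+2) → ℕ)
    (hw : ∀ x, ScF k t x ≤ ScF k t (i0 k)) (h10 : t (i1 k) = 0) : 1 ≤ t (iN k) := by
  have h := hw (i1 k)
  rw [Sc_c_eq hk, Sc_p_eq hk] at h
  by_contra hc
  split_ifs at h <;> omega


lemma isleast_lemma (hk : 1 ≤ k) :
    IsLeast {b : ℕ | ∃ t, (∀ x, ScF k t x ≤ ScF k t (i0 k)) ∧ b = costF k t}
      (2 * k * (2 * k)) := by
  obtain ⟨q, e4, e8, hkq⟩ := ex_q k hk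
  have e2 : 2*k*(2*k) = 4*q := by rw [← e4]; ring
  constructor
  · refine ⟨fun v => if v = i1 k then 1 else 0, ?_, ?_⟩
    · exact winof hk _ (by rw [if_pos rfl])
    · rw [cost_single1 hk, e2, e4]
  · rintro b ⟨t, hw, rfl⟩
    by_cases h1 : 1 ≤ t (i1 k)
    · have := le_cost_of_i1 t h1
      omega
    · have hN := winonly hk t hw (by omega)
      have := le_cost_of_other t (iN k) (Ne.symm ne0N) (Ne.symm (ne1N hk)) hN
      omega

lemma greedy_lemma (hk : 1 ≤ k)
    (buy2 : (Fin (4*k+2) → ℕ) → ℕ → (Fin (4*k+2) → ℕ))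
    (hspec : ∀ u ℓ, (∑ v, (myπ k v (buy2 u ℓ v + u v) - myπ k v (u v))) ≤ ℓ ∧
      (∀ w : Fin (4*k+2) → ℕ, (∑ v, (myπ k v (w v + u v) - myπ k v (u v))) ≤ ℓ →
        ScF k (fun v => u v + w v) (i0 k) ≤ ScF k (fun v => u v + buy2 u ℓ v) (i0 k)) ∧
      (∀ w : Fin (4*k+2) → ℕ, (∑ v, (myπ k v (w v + u v) - myπ k v (u v))) ≤ ℓ →
        ScF k (fun v => u v + w v) (i0 k) = ScF k (fun v => u v + buy2 u ℓ v) (i0 k) →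
        (∑ v, (myπ k v (buy2 u ℓ v + u v) - myπ k v (u v))) ≤
          ∑ v, (myπ k v (w v + u v) - myπ k v (u v)))) :
    costF k (buy2 (fun _ => 0) (sInf {ℓ : ℕ |
        ∀ x, ScF k (buy2 (fun _ => 0) ℓ) x ≤ ScF k (buy2 (fun _ => 0) ℓ) (i0 k)}))
      = 4 * k * (2 * k) - 3 * k := by
  obtain ⟨q, e4, e8, hkq⟩ := ex_q k hk
  have h1 : ∀ ℓ, costF k (buy2 (fun _ => 0) ℓ) ≤ ℓ := by
    intro ℓ
    have := (hspec (fun _ => 0) ℓ).1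
    simpa [costF, myπ_zero] using this
  have h2 : ∀ ℓ w, costF k w ≤ ℓ →
      ScF k w (i0 k) ≤ ScF k (buy2 (fun _ => 0) ℓ) (i0 k) := by
    intro ℓ w hw
    have := (hspec (fun _ => 0) ℓ).2.1 w (by simpa [costF, myπ_zero] using hw)
    simpa using this
  have h3 : ∀ ℓ w, costF k w ≤ ℓ →
      ScF k w (i0 k) = ScF k (buy2 (fun _ => 0) ℓ) (i0 k) →
      costF k (buy2 (fun _ => 0) ℓ) ≤ costF k w := by
    intro ℓ w hw heq
    have := (hspec (fun _ => 0) ℓ).2.2 w (by simpa [costF, myπ_zero] using hw)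
      (by simpa using heq)
    simpa [costF, myπ_zero] using this
  set L : ℕ := 4*k*k - 3*k + 4*k*k with hL
  -- Claim A: below budget L the greedy output never wins
  have claimA : ∀ ℓ, ℓ < L → ¬(∀ x, ScF k (buy2 (fun _ => 0) ℓ) x ≤
      ScF k (buy2 (fun _ => 0) ℓ) (i0 k)) := by
    intro ℓ hℓ hwin
    set w := buy2 (fun _ => 0) ℓ with hw
    have hcw : costF k w ≤ ℓ := h1 ℓ
    have hl8 : ℓ < 8*k*k := by rw [hL] at hℓ; omega
    have hoff : ∀ v, v ≠ i0 k → v ≠ i1 k → w v = 0 :=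
      fun v hv0 hv1 => cost_zero_off w ℓ hcw hl8 v hv0 hv1
    have hwN : w (iN k) = 0 := hoff _ (Ne.symm ne0N) (Ne.symm (ne1N hk))
    have hw1 : 1 ≤ w (i1 k) := by
      by_contra hc
      have := winonly hk w hwin (by omega)
      omega
    have hcost1 : 4*k*k ≤ costF k w := le_cost_of_i1 w hw1
    by_cases hw0 : 1 ≤ w (i0 k)
    · have := le_cost_pair hk w hw0 hw1
      omega
    · -- w (i0 k) = 0 : compare with the single-shift-in-vote-0 action
      have hw0' : w (i0 k) = 0 := by omega
      set w' : Fin (4*k+2) → ℕ := fun v => if v = i0 k then 1 else 0 with hw'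
      have hcw' : costF k w' = 4*k*k - 3*k := cost_single0 hk
      have hcw'ℓ : costF k w' ≤ ℓ := by omega
      have heq : ScF k w' (i0 k) = ScF k w (i0 k) := by
        rw [Sc_p_eq hk, Sc_p_eq hk]
        have a1 : w' (i0 k) = 1 := if_pos rfl
        have a2 : w' (i1 k) = 0 := if_neg (Ne.symm ne01)
        have a3 : w' (iN k) = 0 := if_neg (Ne.symm ne0N)
        rw [a1, a2, a3, hw0', hwN]
        split_ifs <;> omega
      have hfin := h3 ℓ w' hcw'ℓ heq
      rw [← hw] at hfin
      omega
  -- Claim B: at budget L the greedy output wins and costs exactly L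
  have claimB : costF k (buy2 (fun _ => 0) L) = L ∧
      (∀ x, ScF k (buy2 (fun _ => 0) L) x ≤ ScF k (buy2 (fun _ => 0) L) (i0 k)) := by
    set w := buy2 (fun _ => 0) L with hw
    have hcw : costF k w ≤ L := h1 L
    have hL8 : L < 8*k*k := by rw [hL]; omega
    have hoff : ∀ v, v ≠ i0 k → v ≠ i1 k → w v = 0 :=
      fun v hv0 hv1 => cost_zero_off w L hcw hL8 v hv0 hv1
    have hwN : w (iN k) = 0 := hoff _ (Ne.symm ne0N) (Ne.symm (ne1N hk))
    set w'' : Fin (4*k+2) → ℕ := fun v => if v = i0 k then 1 else if v = i1 k then 1 else 0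
      with hw''
    have hcw'' : costF k w'' = L := cost_pair hk
    have hsc := h2 L w'' (le_of_eq hcw'')
    rw [← hw] at hsc
    have b1 : w'' (i0 k) = 1 := if_pos rfl
    have b2 : w'' (i1 k) = 1 := (if_neg (Ne.symm ne01)).trans (if_pos rfl)
    have b3 : w'' (iN k) = 0 := (if_neg (Ne.symm ne0N)).trans (if_neg (Ne.symm (ne1N hk)))
    rw [Sc_p_eq hk, Sc_p_eq hk, b1, b2, b3, hwN] at hsc
    have hboth : 1 ≤ w (i0 k) ∧ 1 ≤ w (i1 k) := by
      constructor <;> by_contra hc <;> split_ifs at hsc <;> omega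
    have hgeL : L ≤ costF k w := by
      rw [hL]; exact le_cost_pair hk w hboth.1 hboth.2
    exact ⟨le_antisymm hcw hgeL, winof hk w hboth.2⟩
  have hSinf : sInf {ℓ : ℕ | ∀ x, ScF k (buy2 (fun _ => 0) ℓ) x ≤
      ScF k (buy2 (fun _ => 0) ℓ) (i0 k)} = L := by
    apply le_antisymm
    · exact Nat.sInf_le claimB.2
    · refine le_csInf ⟨L, claimB.2⟩ ?_
      intro m hm
      by_contra hc
      exact claimA m (by omega) hm
  rw [hSinf, claimB.1, hL]
  have : 4*k*(2*k) = 8*q := by rw [← e8]; ring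
  rw [this, e4]
  omega

end Inst


/-- for every `ε > 0` there is an instance of Borda shift
bribery (the instance `I_k` with `k = ⌈1/ε⌉`, `T = 2k`) on which the two-pass
algorithm `A` attains the optimum `2kT`, while the single-pass greedy algorithm
`G` — run with any subroutine `buy2` that, given an already applied shift-action
`u` and a budget `ℓ`, returns a cheapest residual-cost shift-action of cost at
most `ℓ` maximizing `p`'s score — outputs a solution of cost `4kT − 3k`, which
is at least `(2 − ε)` times the optimum. -/
theorem stmt17 (ε : ℚ) (hε : 0 < ε) :
    ∃ k T : ℕ, (k : ℤ) = ⌈1 / ε⌉ ∧ T = 2 * k ∧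
    ∃ (votes : Fin (4 * k + 2) → (Fin (4 * k + 2) ≃ Fin (4 * k + 2)))
      (π : Fin (4 * k + 2) → ℕ → ℕ) (p : Fin (4 * k + 2)),
      (∀ v, π v 0 = 0) ∧ (∀ v, Monotone (π v)) ∧
      (let Sc : (Fin (4 * k + 2) → ℕ) → Fin (4 * k + 2) → ℤ := fun t x =>
         ∑ v, ((4 * k + 1 : ℤ) - ((shiftVote p (t v) (votes v) x : Fin (4 * k + 2)) : ℕ))
       let win : (Fin (4 * k + 2) → ℕ) → Prop := fun t => ∀ x, Sc t x ≤ Sc t p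
       let cost : (Fin (4 * k + 2) → ℕ) → ℕ := fun t => ∑ v, π v (t v)
       let rcost : (Fin (4 * k + 2) → ℕ) → (Fin (4 * k + 2) → ℕ) → ℕ := fun u w =>
         ∑ v, (π v (w v + u v) - π v (u v))
       -- the optimum cost is 2kT, and algorithm A attains it
       IsLeast {b : ℕ | ∃ t, win t ∧ b = cost t} (2 * k * T) ∧
       -- any run of the greedy algorithm G outputs a solution of cost 4kT − 3k
       (∀ buy2 : (Fin (4 * k + 2) → ℕ) → ℕ → (Fin (4 * k + 2) → ℕ),
         (∀ u ℓ, rcost u (buy2 u ℓ) ≤ ℓ ∧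
           (∀ w, rcost u w ≤ ℓ →
             Sc (fun v => u v + w v) p ≤ Sc (fun v => u v + buy2 u ℓ v) p) ∧
           (∀ w, rcost u w ≤ ℓ →
             Sc (fun v => u v + w v) p = Sc (fun v => u v + buy2 u ℓ v) p →
             rcost u (buy2 u ℓ) ≤ rcost u w)) →
         cost (buy2 (fun _ => 0) (sInf {ℓ : ℕ | win (buy2 (fun _ => 0) ℓ)})) =
           4 * k * T - 3 * k) ∧
       -- G's solution costs at least (2 − ε) times A's solution
       (((4 * k * T - 3 * k : ℕ) : ℚ) ≥ (2 - ε) * ((2 * k * T : ℕ) : ℚ))) := by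
  
  have hceil : 0 < ⌈1 / ε⌉ := Int.ceil_pos.mpr (by positivity)
  set k : ℕ := (⌈1 / ε⌉).toNat with hkdef
  have hk : 1 ≤ k := by omega
  have hkZ : (k : ℤ) = ⌈1 / ε⌉ := by rw [hkdef]; exact Int.toNat_of_nonneg (le_of_lt hceil)
  refine ⟨k, 2 * k, hkZ, rfl, myVotes k, myπ k, i0 k, ?_, ?_, ?_, ?_, ?_⟩
  · intro v; exact myπ_zero v
  · intro v a b hab
    exact Nat.mul_le_mul_left _ hab
  · exact isleast_lemma hk
  · exact fun buy2 hb => greedy_lemma hk buy2 hb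
  · -- (2 - ε) approximation arithmetic
    have hkq : (1:ℚ) / ε ≤ (k:ℚ) := by
      have := Int.le_ceil (1 / ε)
      rw [← hkZ] at this
      exact_mod_cast this
    have hk1 : (1:ℚ) ≤ (k:ℚ) := by exact_mod_cast hk
    have hkε : 1 ≤ (k:ℚ) * ε := by
      rw [div_le_iff₀ hε] at hkq
      linarith
    have hsub : 3*k ≤ 4*k*(2*k) := by
      obtain ⟨q, e4, e8, hq⟩ := ex_q k hk
      have : 4*k*(2*k) = 8*q := by rw [← e8]; ring
      omega
    rw [ge_iff_le, Nat.cast_sub hsub]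
    push_cast
    nlinarith [mul_le_mul_of_nonneg_left hkε (by positivity : (0:ℚ) ≤ 4*(k:ℚ)*(k:ℚ)), hk1,
      mul_pos hε (by linarith : (0:ℚ) < (k:ℚ))]
end
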